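/- Let s₂ be the real 4-dimensional Lie algebra with basis e₁, e₂, e₃, e₄ and nonzero brackets ⁅e₁, e₄⁆ = −e₁, ⁅e₂, e₄⁆ = −e₁ − e₂, ⁅e₃, e₄⁆ = −e₂ − e₃ (all other brackets of basis elements zero, extended bilinearly and antisymmetrically). A linear endomorphism D of s₂ is a derivation of s₂ if and only if there exist real numbers μ₁₁, μ₁₂, μ₁₃, μ₁₄, μ₂₄, μ₃₄ such that D e₁ = μ₁₁ e₁, D e₂ = μ₁₂ e₁ + μ₁₁ e₂, D e₃ = μ₁₃ e₁ + μ₁₂ e₂ + μ₁₁ e₃, and D e₄ = μ₁₄ e₁ + μ₂₄ e₂ + μ₃₄ e₃. -/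

import Mathlib

/-- Characterization of the derivations of the real 4-dimensional Lie algebra `s₂`
(Šnobl–Winternitz `s_{4,2}`), with basis `e₁ = b 0, …, e₄ = b 3` and nonzero brackets
`⁅e₁, e₄⁆ = -e₁`, `⁅e₂, e₄⁆ = -e₁ - e₂`, `⁅e₃, e₄⁆ = -e₂ - e₃`. -/
theorem stmt_11 {L : Type*} [LieRing L] [LieAlgebra ℝ L]
    (b : Module.Basis (Fin 4) ℝ L)
    (h12 : ⁅b 0, b 1⁆ = 0) (h13 : ⁅b 0, b 2⁆ = 0) (h14 : ⁅b 0, b 3⁆ = -b 0)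
    (h23 : ⁅b 1, b 2⁆ = 0) (h24 : ⁅b 1, b 3⁆ = -b 0 - b 1) (h34 : ⁅b 2, b 3⁆ = -b 1 - b 2)
    (D : L →ₗ[ℝ] L) :
    (∀ x y : L, D ⁅x, y⁆ = ⁅D x, y⁆ + ⁅x, D y⁆) ↔
      ∃ μ11 μ12 μ13 μ14 μ24 μ34 : ℝ,
        D (b 0) = μ11 • b 0 ∧
        D (b 1) = μ12 • b 0 + μ11 • b 1 ∧
        D (b 2) = μ13 • b 0 + μ12 • b 1 + μ11 • b 2 ∧
        D (b 3) = μ14 • b 0 + μ24 • b 1 + μ34 • b 2 := by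
  have l10 : ⁅b 1, b 0⁆ = 0 := by rw [← lie_skew, h12, neg_zero]
  have l20 : ⁅b 2, b 0⁆ = 0 := by rw [← lie_skew, h13, neg_zero]
  have l30 : ⁅b 3, b 0⁆ = b 0 := by rw [← lie_skew, h14, neg_neg]
  have l21 : ⁅b 2, b 1⁆ = 0 := by rw [← lie_skew, h23, neg_zero]
  have l31 : ⁅b 3, b 1⁆ = b 0 + b 1 := by rw [← lie_skew, h24]; abel
  have l32 : ⁅b 3, b 2⁆ = b 1 + b 2 := by rw [← lie_skew, h34]; abel
  have hrep : ∀ x : L, x = b.repr x 0 • b 0 + b.repr x 1 • b 1 + b.repr x 2 • b 2 + b.repr x 3 • b 3 := by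
    intro x
    have := b.sum_repr x
    rw [Fin.sum_univ_four] at this
    exact this.symm
  constructor
  · intro hD
    have hD0 := hrep (D (b 0))
    have hD1 := hrep (D (b 1))
    have hD2 := hrep (D (b 2))
    have hD3 := hrep (D (b 3))
    set a0 := b.repr (D (b 0)) 0 with ha0
    set a1 := b.repr (D (b 0)) 1 with ha1
    set a2 := b.repr (D (b 0)) 2 with ha2
    set a3 := b.repr (D (b 0)) 3 with ha3
    set p0 := b.repr (D (b 1)) 0 with hp0
    set p1 := b.repr (D (b 1)) 1 with hp1
    set p2 := b.repr (D (b 1)) 2 with hp2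
    set p3 := b.repr (D (b 1)) 3 with hp3
    set q0 := b.repr (D (b 2)) 0 with hq0
    set q1 := b.repr (D (b 2)) 1 with hq1
    set q2 := b.repr (D (b 2)) 2 with hq2
    set q3 := b.repr (D (b 2)) 3 with hq3
    set r0 := b.repr (D (b 3)) 0 with hr0
    set r1 := b.repr (D (b 3)) 1 with hr1
    set r2 := b.repr (D (b 3)) 2 with hr2
    set r3 := b.repr (D (b 3)) 3 with hr3
    have E : ∀ (i j : Fin 4) (k : Fin 4),
        b.repr (D ⁅b i, b j⁆) k = b.repr (⁅D (b i), b j⁆ + ⁅b i, D (b j)⁆) k :=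
      fun i j k => congrArg (fun z => b.repr z k) (hD _ _)
    -- scalar equations
    have e12 := fun k => E 0 1 k
    have e13 := fun k => E 0 2 k
    have e23 := fun k => E 1 2 k
    have e14 := fun k => E 0 3 k
    have e24 := fun k => E 1 3 k
    have e34 := fun k => E 2 3 k
    simp only [h12, h13, h23, h14, h24, h34, map_zero, map_sub, map_neg] at e12 e13 e23 e14 e24 e34
    rw [hD0, hD1] at e12
    rw [hD0, hD2] at e13
    rw [hD1, hD2] at e23
    rw [hD0, hD3] at e14
    rw [hD1, hD3] at e24
    rw [hD2, hD3] at e34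
    simp only [add_lie, lie_add, smul_lie, lie_smul, h12, h13, h14, h23, h24, h34,
      l10, l20, l30, l21, l31, l32, lie_self, smul_zero, add_zero, zero_add,
      smul_neg, smul_add, smul_sub, map_add, map_smul, map_neg, map_sub,
      Module.Basis.repr_self, Finsupp.smul_single, Finsupp.single_apply,
      Finsupp.coe_add, Finsupp.coe_neg, Finsupp.coe_sub, Pi.add_apply, Pi.neg_apply, Pi.sub_apply,
      smul_eq_mul, mul_one] at e12 e13 e23 e14 e24 e34
    have s121 := e12 1
    have s120 := e12 0
    have s130 := e13 0
    have s140 := e14 0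
    have s141 := e14 1
    have s240 := e24 0
    have s241 := e24 1
    have s242 := e24 2
    have s340 := e34 0
    have s341 := e34 1
    have s342 := e34 2
    simp only [← ha0, ← ha1, ← ha2, ← ha3, ← hp0, ← hp1, ← hp2, ← hp3,
      ← hq0, ← hq1, ← hq2, ← hq3, ← hr0, ← hr1, ← hr2, ← hr3,
      Finsupp.coe_zero, Pi.zero_apply, Fin.isValue, reduceIte,
      show (0:Fin 4) ≠ 1 by decide, show (0:Fin 4) ≠ 2 by decide,
      show (0:Fin 4) ≠ 3 by decide, show (1:Fin 4) ≠ 0 by decide,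
      show (1:Fin 4) ≠ 2 by decide, show (1:Fin 4) ≠ 3 by decide,
      show (2:Fin 4) ≠ 0 by decide, show (2:Fin 4) ≠ 1 by decide,
      show (2:Fin 4) ≠ 3 by decide, show (3:Fin 4) ≠ 0 by decide,
      show (3:Fin 4) ≠ 1 by decide, show (3:Fin 4) ≠ 2 by decide,
      if_neg, if_pos, neg_zero, add_zero, zero_add, sub_zero, zero_sub, neg_neg]
      at s121 s120 s130 s140 s141 s240 s241 s242 s340 s341 s342
    have za3 : a3 = 0 := by linarith
    have zp3 : p3 = 0 := by linarith
    have zq3 : q3 = 0 := by linarith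
    have za2 : a2 = 0 := by linarith
    have zr3 : r3 = 0 := by linarith
    have za1 : a1 = 0 := by linarith
    have zp2 : p2 = 0 := by linarith
    have hp1 : p1 = a0 := by linarith
    have hq1 : q1 = p0 := by linarith
    have hq2 : q2 = a0 := by linarith
    refine ⟨a0, p0, q0, r0, r1, r2, ?_, ?_, ?_, ?_⟩
    · rw [hD0, za1, za2, za3]; module
    · rw [hD1, hp1, zp2, zp3]; module
    · rw [hD2, hq1, hq2, zq3]; module
    · rw [hD3, zr3]; module

  · rintro ⟨μ11, μ12, μ13, μ14, μ24, μ34, k0, k1, k2, k3⟩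
    intro x y
    rw [hrep x, hrep y]
    simp only [add_lie, lie_add, smul_lie, lie_smul, map_add, map_smul,
      h12, h13, h14, h23, h24, h34, l10, l20, l30, l21, l31, l32, lie_self,
      map_zero, map_neg, map_sub, smul_zero, add_zero, zero_add,
      k0, k1, k2, k3]
    module
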